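/- Let f: ℝ^n → ℝ^n be continuously differentiable with forward-complete flow ξ(t,x). Then for all x, x̄ ∈ ℝ^n and t ≥ 0, |ξ(t,x̄) − ξ(t,x)| ≤ exp( max_{v ∈ [x, x̄]} ∫_0^t μ(J f(ξ(s,v))) ds ) · |x̄ − x|, where [x, x̄] is the line segment between x and x̄, J f is the Jacobian of f, and μ the matrix measure associated to any induced norm. -/

import Mathlib

open Filter Topology

noncomputable def inducedNorm {n : ℕ} (ν : (Fin n → ℝ) → ℝ)
    (A : Matrix (Fin n) (Fin n) ℝ) : ℝ :=
  sSup ((fun v => ν (A.mulVec v)) '' {v | ν v = 1})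

def IsNormOn {E : Type*} [AddCommGroup E] [Module ℝ E] (ν : E → ℝ) : Prop :=
  (∀ v, 0 ≤ ν v) ∧ (∀ v, ν v = 0 ↔ v = 0) ∧
    (∀ (c : ℝ) v, ν (c • v) = |c| * ν v) ∧ ∀ v w, ν (v + w) ≤ ν v + ν w

def IsMatrixMeasure {n : ℕ} (ν : (Fin n → ℝ) → ℝ)
    (A : Matrix (Fin n) (Fin n) ℝ) (m : ℝ) : Prop :=
  Tendsto (fun t : ℝ => (inducedNorm ν (1 + t • A) - 1) / t)
    (nhdsWithin 0 (Set.Ioi 0)) (nhds m)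

/-- Bundled norm with equivalence constants to the sup norm. -/
structure NormPack (n : ℕ) where
  ν : (Fin n → ℝ) → ℝ
  C1 : ℝ
  C2 : ℝ
  hC1 : 0 < C1
  hC2 : 0 < C2
  nonneg : ∀ v, 0 ≤ ν v
  smul : ∀ (c : ℝ) v, ν (c • v) = |c| * ν v
  add_le : ∀ v w, ν (v + w) ≤ ν v + ν w
  lower : ∀ v, C1 * ‖v‖ ≤ ν v
  upper : ∀ v, ν v ≤ C2 * ‖v‖
  exu : ∃ v, ν v = 1

namespace NormPack

variable {n : ℕ} (P : NormPack n)

lemma zero : P.ν 0 = 0 := by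
  have := P.smul 0 0; simpa using this

lemma neg (v : Fin n → ℝ) : P.ν (-v) = P.ν v := by
  have := P.smul (-1) v; simpa using this

lemma sub_le (a b : Fin n → ℝ) : P.ν a ≤ P.ν b + P.ν (a - b) := by
  have := P.add_le b (a - b); simpa using this

lemma sub_symm (a b : Fin n → ℝ) : P.ν (a - b) = P.ν (b - a) := by
  rw [← P.neg (a - b)]; congr 1; abel

lemma abs_sub (a b : Fin n → ℝ) : |P.ν a - P.ν b| ≤ P.ν (a - b) := by
  rw [abs_le]
  constructor
  · have := P.sub_le b a; rw [P.sub_symm b a] at this; linarith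
  · have := P.sub_le a b; linarith

lemma continuous : Continuous P.ν := by
  refine LipschitzWith.continuous (K := ⟨P.C2, P.hC2.le⟩) (LipschitzWith.of_dist_le_mul ?_)
  intro a b
  calc dist (P.ν a) (P.ν b) = |P.ν a - P.ν b| := Real.dist_eq _ _
    _ ≤ P.ν (a - b) := P.abs_sub a b
    _ ≤ P.C2 * ‖a - b‖ := P.upper _
    _ = ↑(⟨P.C2, P.hC2.le⟩ : NNReal) * dist a b := by rw [dist_eq_norm]

lemma sum_le {ι : Type*} (s : Finset ι) (g : ι → Fin n → ℝ) :
    P.ν (∑ i ∈ s, g i) ≤ ∑ i ∈ s, P.ν (g i) := by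
  classical
  induction s using Finset.induction with
  | empty => simp [P.zero]
  | insert _ _ h ih =>
    rw [Finset.sum_insert h, Finset.sum_insert h]
    exact (P.add_le _ _).trans (by linarith)

end NormPack

namespace NormPack

variable {n : ℕ} (P : NormPack n)

/-- sum of absolute values of entries -/
noncomputable def ent (A : Matrix (Fin n) (Fin n) ℝ) : ℝ := ∑ i, ∑ j, |A i j|

lemma ent_nonneg (A : Matrix (Fin n) (Fin n) ℝ) : 0 ≤ ent A := by
  apply Finset.sum_nonneg; intro i _; apply Finset.sum_nonneg; intro j _; positivity

lemma abs_entry_le_ent (A : Matrix (Fin n) (Fin n) ℝ) (i j : Fin n) : |A i j| ≤ ent A := by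
  calc |A i j| ≤ ∑ j', |A i j'| :=
        Finset.single_le_sum (f := fun j' => |A i j'|) (fun j' _ => abs_nonneg _) (Finset.mem_univ j)
    _ ≤ ent A :=
        Finset.single_le_sum (f := fun i' => ∑ j', |A i' j'|)
          (fun i' _ => Finset.sum_nonneg fun j' _ => abs_nonneg _) (Finset.mem_univ i)

lemma ent_le_of_entries_le {A : Matrix (Fin n) (Fin n) ℝ} {c : ℝ}
    (h : ∀ i j, |A i j| ≤ c) : ent A ≤ (n : ℝ)^2 * c := by
  calc ent A ≤ ∑ _i : Fin n, ∑ _j : Fin n, c :=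
        Finset.sum_le_sum fun i _ => Finset.sum_le_sum fun j _ => h i j
    _ = (n : ℝ)^2 * c := by simp [Finset.sum_const]; ring

lemma norm_mulVec_le (A : Matrix (Fin n) (Fin n) ℝ) (v : Fin n → ℝ) :
    ‖A.mulVec v‖ ≤ ent A * ‖v‖ := by
  have hnn : 0 ≤ ent A * ‖v‖ := mul_nonneg (ent_nonneg A) (norm_nonneg v)
  rw [pi_norm_le_iff_of_nonneg hnn]
  intro i
  calc ‖A.mulVec v i‖ = |∑ j, A i j * v j| := by rfl
    _ ≤ ∑ j, |A i j * v j| := Finset.abs_sum_le_sum_abs _ _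
    _ ≤ ∑ j, |A i j| * ‖v‖ := by
        refine Finset.sum_le_sum fun j _ => ?_
        rw [abs_mul]
        exact mul_le_mul_of_nonneg_left (norm_le_pi_norm v j) (abs_nonneg _)
    _ = (∑ j, |A i j|) * ‖v‖ := by rw [Finset.sum_mul]
    _ ≤ ent A * ‖v‖ := by
        refine mul_le_mul_of_nonneg_right ?_ (norm_nonneg v)
        exact Finset.single_le_sum (f := fun i' => ∑ j', |A i' j'|)
          (fun i' _ => Finset.sum_nonneg fun j' _ => abs_nonneg _) (Finset.mem_univ i)

/-- abbreviation for the induced operator norm -/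
noncomputable def op (A : Matrix (Fin n) (Fin n) ℝ) : ℝ := inducedNorm P.ν A

lemma nu_mulVec_le_aux (A : Matrix (Fin n) (Fin n) ℝ) {w : Fin n → ℝ} (hw : P.ν w = 1) :
    P.ν (A.mulVec w) ≤ P.op A := by
  apply le_csSup
  · refine ⟨P.C2 * ent A / P.C1, ?_⟩
    rintro y ⟨u, hu, rfl⟩
    have h1 : P.C1 * ‖u‖ ≤ 1 := by rw [← hu]; exact P.lower u
    have h2 : ‖u‖ ≤ 1 / P.C1 := by
      rw [le_div_iff₀ P.hC1]; linarith
    calc P.ν (A.mulVec u) ≤ P.C2 * ‖A.mulVec u‖ := P.upper _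
      _ ≤ P.C2 * (ent A * ‖u‖) :=
          mul_le_mul_of_nonneg_left (norm_mulVec_le A u) P.hC2.le
      _ ≤ P.C2 * (ent A * (1 / P.C1)) := by
          refine mul_le_mul_of_nonneg_left (mul_le_mul_of_nonneg_left h2 (ent_nonneg A)) P.hC2.le
      _ = P.C2 * ent A / P.C1 := by ring
  · exact ⟨w, hw, rfl⟩

lemma op_nonneg (A : Matrix (Fin n) (Fin n) ℝ) : 0 ≤ P.op A :=
  Real.sSup_nonneg fun y ⟨u, _, h⟩ => h ▸ P.nonneg _

lemma nu_mulVec_le (A : Matrix (Fin n) (Fin n) ℝ) (v : Fin n → ℝ) :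
    P.ν (A.mulVec v) ≤ P.op A * P.ν v := by
  by_cases hv : P.ν v = 0
  · have hv0 : v = 0 := by
      by_contra h
      have := P.lower v
      have : (0:ℝ) < ‖v‖ := norm_pos_iff.mpr h
      nlinarith [P.lower v, P.hC1]
    subst hv0
    simp [Matrix.mulVec_zero, P.zero, hv]
  · have hpos : 0 < P.ν v := lt_of_le_of_ne (P.nonneg v) (Ne.symm hv)
    set w := (P.ν v)⁻¹ • v with hw
    have hw1 : P.ν w = 1 := by
      rw [hw, P.smul, abs_of_pos (inv_pos.mpr hpos), inv_mul_cancel₀ hv]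
    have hvw : v = P.ν v • w := by
      rw [hw, smul_smul, mul_inv_cancel₀ hv, one_smul]
    calc P.ν (A.mulVec v) = P.ν (A.mulVec (P.ν v • w)) := by rw [← hvw]
      _ = P.ν (P.ν v • A.mulVec w) := by rw [Matrix.mulVec_smul]
      _ = P.ν v * P.ν (A.mulVec w) := by rw [P.smul, abs_of_pos hpos]
      _ ≤ P.ν v * P.op A := mul_le_mul_of_nonneg_left (P.nu_mulVec_le_aux A hw1) hpos.le
      _ = P.op A * P.ν v := mul_comm _ _

lemma op_le (A : Matrix (Fin n) (Fin n) ℝ) {c : ℝ} (hc : 0 ≤ c)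
    (h : ∀ w, P.ν w = 1 → P.ν (A.mulVec w) ≤ c) : P.op A ≤ c := by
  apply Real.sSup_le _ hc
  rintro y ⟨u, hu, rfl⟩
  exact h u hu

lemma op_add_le (A B : Matrix (Fin n) (Fin n) ℝ) : P.op (A + B) ≤ P.op A + P.op B := by
  refine P.op_le _ (add_nonneg (P.op_nonneg A) (P.op_nonneg B)) fun w hw => ?_
  rw [Matrix.add_mulVec]
  refine (P.add_le _ _).trans (add_le_add ?_ ?_)
  · exact (P.nu_mulVec_le_aux A hw)
  · exact (P.nu_mulVec_le_aux B hw)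

lemma op_smul_le (A : Matrix (Fin n) (Fin n) ℝ) {h : ℝ} (hh : 0 ≤ h) :
    P.op (h • A) ≤ h * P.op A := by
  refine P.op_le _ (mul_nonneg hh (P.op_nonneg A)) fun w hw => ?_
  rw [Matrix.smul_mulVec, P.smul, abs_of_nonneg hh]
  exact mul_le_mul_of_nonneg_left (P.nu_mulVec_le_aux A hw) hh

lemma op_le_ent (A : Matrix (Fin n) (Fin n) ℝ) : P.op A ≤ P.C2 / P.C1 * ent A := by
  refine P.op_le _ (by have := ent_nonneg A; have := P.hC1; have := P.hC2; positivity) fun w hw => ?_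
  have h2 : ‖w‖ ≤ 1 / P.C1 := by
    rw [le_div_iff₀ P.hC1]
    have := P.lower w; rw [hw] at this; linarith
  calc P.ν (A.mulVec w) ≤ P.C2 * ‖A.mulVec w‖ := P.upper _
    _ ≤ P.C2 * (ent A * ‖w‖) := mul_le_mul_of_nonneg_left (norm_mulVec_le A w) P.hC2.le
    _ ≤ P.C2 * (ent A * (1 / P.C1)) :=
        mul_le_mul_of_nonneg_left (mul_le_mul_of_nonneg_left h2 (ent_nonneg A)) P.hC2.le
    _ = P.C2 / P.C1 * ent A := by ring

lemma op_one : P.op 1 = 1 := by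
  obtain ⟨v, hv⟩ := P.exu
  apply le_antisymm
  · refine P.op_le _ zero_le_one fun w hw => ?_
    rw [Matrix.one_mulVec, hw]
  · have := P.nu_mulVec_le_aux (1 : Matrix (Fin n) (Fin n) ℝ) hv
    rwa [Matrix.one_mulVec, hv] at this

end NormPack

namespace NormPack

variable {n : ℕ} (P : NormPack n)

lemma op_neg_le (A : Matrix (Fin n) (Fin n) ℝ) : P.op (-A) ≤ P.op A := by
  refine P.op_le _ (P.op_nonneg A) fun w hw => ?_
  rw [Matrix.neg_mulVec, P.neg]
  exact P.nu_mulVec_le_aux A hw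

lemma mu_le {M N : Matrix (Fin n) (Fin n) ℝ} {mM mN : ℝ}
    (hM : IsMatrixMeasure P.ν M mM) (hN : IsMatrixMeasure P.ν N mN) :
    mM ≤ mN + P.op (M - N) := by
  set c := P.op (M - N) with hc
  refine le_of_tendsto_of_tendsto hM (hN.add_const c) ?_
  filter_upwards [self_mem_nhdsWithin] with h (hh : h ∈ Set.Ioi (0:ℝ))
  have hh0 : (0:ℝ) < h := hh
  have key : inducedNorm P.ν (1 + h • M) ≤ inducedNorm P.ν (1 + h • N) + h * c := by
    have hEq : (1 : Matrix (Fin n) (Fin n) ℝ) + h • M = (1 + h • N) + h • (M - N) := by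
      rw [smul_sub]; abel
    rw [hEq]
    calc inducedNorm P.ν ((1 + h • N) + h • (M - N))
        ≤ P.op (1 + h • N) + P.op (h • (M - N)) := P.op_add_le _ _
      _ ≤ inducedNorm P.ν (1 + h • N) + h * c :=
          add_le_add_right (P.op_smul_le (M - N) hh0.le) _
  show (inducedNorm P.ν (1 + h • M) - 1) / h ≤ (inducedNorm P.ν (1 + h • N) - 1) / h + c
  rw [← mul_div_cancel_left₀ c (ne_of_gt hh0), ← add_div]
  rw [div_le_div_iff_of_pos_right hh0]
  linarith

lemma isMatrixMeasure_zero : IsMatrixMeasure P.ν (0 : Matrix (Fin n) (Fin n) ℝ) 0 := by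
  unfold IsMatrixMeasure
  have : (fun t : ℝ => (inducedNorm P.ν (1 + t • (0:Matrix (Fin n) (Fin n) ℝ)) - 1) / t)
      = fun _ => 0 := by
    funext t
    have : (1 : Matrix (Fin n) (Fin n) ℝ) + t • 0 = 1 := by simp
    rw [this]
    have h1 : inducedNorm P.ν 1 = 1 := P.op_one
    rw [h1]; simp
  rw [this]
  exact tendsto_const_nhds

lemma abs_mu_le {M : Matrix (Fin n) (Fin n) ℝ} {mM : ℝ}
    (hM : IsMatrixMeasure P.ν M mM) : |mM| ≤ P.op M := by
  rw [abs_le]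
  constructor
  · have := P.mu_le P.isMatrixMeasure_zero hM
    have h2 : P.op (0 - M) ≤ P.op M := by
      rw [zero_sub]; exact P.op_neg_le M
    linarith
  · have := P.mu_le hM P.isMatrixMeasure_zero
    simpa using this

lemma mu_dist_le {M N : Matrix (Fin n) (Fin n) ℝ} {mM mN : ℝ}
    (hM : IsMatrixMeasure P.ν M mM) (hN : IsMatrixMeasure P.ν N mN) :
    |mM - mN| ≤ P.C2 / P.C1 * ent (M - N) := by
  rw [abs_le]
  constructor
  · have h1 := P.mu_le hN hM
    have h2 : P.op (N - M) ≤ P.C2 / P.C1 * ent (N - M) := P.op_le_ent _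
    have h3 : ent (N - M) = ent (M - N) := by
      unfold ent; congr 1; funext i; congr 1; funext j
      simp [abs_sub_comm]
    rw [h3] at h2
    linarith
  · have h1 := P.mu_le hM hN
    have h2 : P.op (M - N) ≤ P.C2 / P.C1 * ent (M - N) := P.op_le_ent _
    linarith

lemma continuous_mu_comp {α : Type*} [TopologicalSpace α]
    (μ : Matrix (Fin n) (Fin n) ℝ → ℝ) (hμ : ∀ M, IsMatrixMeasure P.ν M (μ M))
    (g : α → Matrix (Fin n) (Fin n) ℝ) (hg : ∀ i j, Continuous fun a => g a i j) :
    Continuous fun a => μ (g a) := by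
  rw [continuous_iff_continuousAt]
  intro b
  unfold ContinuousAt
  rw [tendsto_iff_dist_tendsto_zero]
  have hbound : ∀ a, dist (μ (g a)) (μ (g b)) ≤
      P.C2 / P.C1 * ∑ i, ∑ j, |g a i j - g b i j| := by
    intro a
    rw [Real.dist_eq]
    have := P.mu_dist_le (hμ (g a)) (hμ (g b))
    have hent : ent (g a - g b) = ∑ i, ∑ j, |g a i j - g b i j| := by
      unfold ent; rfl
    rw [hent] at this
    exact this
  have hcont : Continuous fun a => P.C2 / P.C1 * ∑ i, ∑ j, |g a i j - g b i j| := by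
    apply Continuous.mul continuous_const
    apply continuous_finset_sum
    intro i _
    apply continuous_finset_sum
    intro j _
    exact ((hg i j).sub continuous_const).abs
  have hzero : (fun a => P.C2 / P.C1 * ∑ i, ∑ j, |g a i j - g b i j|) b = 0 := by simp
  have htend : Tendsto (fun a => P.C2 / P.C1 * ∑ i, ∑ j, |g a i j - g b i j|) (𝓝 b) (𝓝 0) := by
    rw [← hzero]
    exact hcont.tendsto b
  exact squeeze_zero (fun a => dist_nonneg) hbound htend

end NormPack

namespace NormPack

variable {n : ℕ}

/-- Core Grönwall / logarithmic-norm estimate for a linear time-varying ODE. -/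
lemma gronwall_mu (P : NormPack n)
    (μ : Matrix (Fin n) (Fin n) ℝ → ℝ) (hμ : ∀ M, IsMatrixMeasure P.ν M (μ M))
    (η : ℝ → Fin n → ℝ) (A : ℝ → Matrix (Fin n) (Fin n) ℝ) (m : ℝ → ℝ)
    (T : ℝ) (hT : 0 ≤ T)
    (hη : ∀ s, HasDerivAt η ((A s).mulVec (η s)) s)
    (hm : Continuous m)
    (hAm : ∀ s ∈ Set.Icc 0 T, μ (A s) ≤ m s) :
    P.ν (η T) ≤ Real.exp (∫ s in (0:ℝ)..T, m s) * P.ν (η 0) := by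
  set I : ℝ → ℝ := fun s => ∫ u in (0:ℝ)..s, m u with hIdef
  have hI : ∀ s, HasDerivAt I (m s) s := fun s =>
    intervalIntegral.integral_hasDerivAt_right (hm.intervalIntegrable _ _)
      (hm.stronglyMeasurableAtFilter _ _) hm.continuousAt
  have hIcont : Continuous I := continuous_iff_continuousAt.mpr fun s => (hI s).continuousAt
  have hηcont : Continuous η := continuous_iff_continuousAt.mpr fun s => (hη s).continuousAt
  set ψ : ℝ → ℝ := fun s => P.ν (η s) * Real.exp (-(I s)) with hψdef
  have hψcont : Continuous ψ :=
    (P.continuous.comp hηcont).mul (Real.continuous_exp.comp hIcont.neg)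
  -- main step : ψ T ≤ ψ 0 + ε'' T for every ε'' > 0
  have key : ∀ ε'' : ℝ, 0 < ε'' → ψ T ≤ ψ 0 + ε'' * T := by
    intro ε'' hε''
    have hf' : ∀ x ∈ Set.Ico (0:ℝ) T, ∀ r, (ε'' : ℝ) < r →
        ∃ᶠ z in 𝓝[>] x, (z - x)⁻¹ * (ψ z - ψ x) < r := by
      intro x hx r hr
      set b := P.ν (η x) with hb
      set v := (A x).mulVec (η x) with hv
      set a : ℝ → ℝ := fun z =>
        P.op (1 + (z - x) • A x) * b + P.C2 * ‖η z - η x - (z - x) • v‖ with ha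
      set G : ℝ → ℝ := fun z => Real.exp (-(I z - I x)) with hG
      have hGpos : ∀ z, 0 < G z := fun z => Real.exp_pos _
      have hbnn : 0 ≤ b := P.nonneg _
      -- pointwise bound : ν (η z) ≤ a z
      have hνa : ∀ z, P.ν (η z) ≤ a z := by
        intro z
        have h1 : P.ν (η z) ≤ P.ν (η x + (z - x) • v) +
            P.ν (η z - (η x + (z - x) • v)) := P.sub_le _ _
        have h2 : η x + (z - x) • v = (1 + (z - x) • A x).mulVec (η x) := by
          rw [Matrix.add_mulVec, Matrix.one_mulVec, Matrix.smul_mulVec]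
        have h3 : P.ν (η x + (z - x) • v) ≤ P.op (1 + (z - x) • A x) * b := by
          rw [h2]; exact P.nu_mulVec_le _ _
        have h4 : P.ν (η z - (η x + (z - x) • v)) ≤ P.C2 * ‖η z - η x - (z - x) • v‖ := by
          have : η z - (η x + (z - x) • v) = η z - η x - (z - x) • v := by abel
          rw [this]; exact P.upper _
        calc P.ν (η z) ≤ _ := h1
          _ ≤ a z := add_le_add h3 h4
      -- pointwise bound : ψ z ≤ a z * G z * exp (-(I x))
      have hψle : ∀ z, ψ z ≤ a z * G z * Real.exp (-(I x)) := by
        intro z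
        have hexp : Real.exp (-(I z)) = G z * Real.exp (-(I x)) := by
          rw [hG, ← Real.exp_add]; ring_nf
        calc ψ z = P.ν (η z) * Real.exp (-(I z)) := rfl
          _ ≤ a z * Real.exp (-(I z)) :=
              mul_le_mul_of_nonneg_right (hνa z) (Real.exp_pos _).le
          _ = a z * G z * Real.exp (-(I x)) := by rw [hexp]; ring
      have hψx : ψ x = b * Real.exp (-(I x)) := rfl
      -- limit computation
      have hsub : Tendsto (fun z => z - x) (𝓝[>] x) (𝓝[>] (0:ℝ)) := by
        apply tendsto_nhdsWithin_of_tendsto_nhds_of_eventually_within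
        · have : Tendsto (fun z : ℝ => z - x) (𝓝 x) (𝓝 (x - x)) :=
            (continuous_id.sub continuous_const).tendsto x
          rw [sub_self] at this
          exact this.mono_left nhdsWithin_le_nhds
        · filter_upwards [self_mem_nhdsWithin] with z hz
          exact sub_pos.mpr (show x < z from hz)
      have T1a : Tendsto (fun z => (P.op (1 + (z - x) • A x) - 1) / (z - x))
          (𝓝[>] x) (𝓝 (μ (A x))) := (hμ (A x)).comp hsub
      have T1b : Tendsto (fun z => ‖z - x‖⁻¹ * ‖η z - η x - (z - x) • v‖) (𝓝[>] x) (𝓝 0) :=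
        (hasDerivAt_iff_tendsto.mp (hη x)).mono_left nhdsWithin_le_nhds
      have T1b' : Tendsto (fun z => (z - x)⁻¹ * ‖η z - η x - (z - x) • v‖) (𝓝[>] x) (𝓝 0) := by
        refine T1b.congr' ?_
        filter_upwards [self_mem_nhdsWithin] with z hz
        rw [Real.norm_eq_abs, abs_of_pos (sub_pos.mpr hz)]
      have T1 : Tendsto (fun z => (z - x)⁻¹ * (a z - b)) (𝓝[>] x) (𝓝 (μ (A x) * b)) := by
        have : Tendsto (fun z => (P.op (1 + (z - x) • A x) - 1) / (z - x) * b
            + P.C2 * ((z - x)⁻¹ * ‖η z - η x - (z - x) • v‖)) (𝓝[>] x)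
            (𝓝 (μ (A x) * b + P.C2 * 0)) := (T1a.mul_const b).add (T1b'.const_mul _)
        rw [mul_zero, add_zero] at this
        refine this.congr' ?_
        filter_upwards [self_mem_nhdsWithin] with z hz
        have hzx : z - x ≠ 0 := ne_of_gt (sub_pos.mpr hz)
        rw [ha]
        field_simp
        ring
      have hGderiv : HasDerivAt G (-(m x)) x := by
        have h1 : HasDerivAt (fun z => -(I z - I x)) (-(m x)) x := ((hI x).sub_const (I x)).neg
        have h2 := h1.exp
        have h3 : Real.exp (-(I x - I x)) * -(m x) = -(m x) := by simp
        exact h3 ▸ h2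
      have T2 : Tendsto (fun z => (z - x)⁻¹ * (G z - 1)) (𝓝[>] x) (𝓝 (-(m x))) := by
        have hs := hasDerivAt_iff_tendsto_slope.mp hGderiv
        have hmono : 𝓝[>] x ≤ 𝓝[≠] x :=
          nhdsWithin_mono x fun z hz => ne_of_gt hz
        have := hs.mono_left hmono
        refine this.congr' ?_
        filter_upwards [self_mem_nhdsWithin] with z hz
        rw [slope_def_field]
        show (G z - G x) / (z - x) = (z - x)⁻¹ * (G z - 1)
        have hGx : G x = 1 := by rw [hG]; simp
        rw [hGx, inv_mul_eq_div]
      have TG : Tendsto G (𝓝[>] x) (𝓝 1) := by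
        have hc : Continuous G := Real.continuous_exp.comp ((hIcont.sub continuous_const)).neg
        have := (hc.tendsto x).mono_left (nhdsWithin_le_nhds (s := Set.Ioi x))
        simpa [hG] using this
      have Tmain : Tendsto (fun z => (z - x)⁻¹ * (a z * G z - b)) (𝓝[>] x)
          (𝓝 ((μ (A x) - m x) * b)) := by
        have h := (T1.mul TG).add (T2.const_mul b)
        have heq : μ (A x) * b * 1 + b * -(m x) = (μ (A x) - m x) * b := by ring
        rw [heq] at h
        refine h.congr' ?_
        filter_upwards [self_mem_nhdsWithin] with z hz
        have hzx : z - x ≠ 0 := ne_of_gt (sub_pos.mpr hz)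
        field_simp
        ring
      -- conclude frequently
      have hL : (μ (A x) - m x) * b ≤ 0 := by
        have := hAm x (Set.mem_Icc.mpr ⟨hx.1, hx.2.le⟩)
        exact mul_nonpos_of_nonpos_of_nonneg (by linarith) hbnn
      have hfin : Tendsto (fun z => Real.exp (-(I x)) * ((z - x)⁻¹ * (a z * G z - b)))
          (𝓝[>] x) (𝓝 (Real.exp (-(I x)) * ((μ (A x) - m x) * b))) := Tmain.const_mul _
      have hlt : Real.exp (-(I x)) * ((μ (A x) - m x) * b) < r := by
        have h1 : Real.exp (-(I x)) * ((μ (A x) - m x) * b) ≤ 0 :=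
          mul_nonpos_of_nonneg_of_nonpos (Real.exp_pos _).le hL
        linarith
      have hev := hfin.eventually_lt_const hlt
      refine (hev.mp ?_).frequently
      filter_upwards [self_mem_nhdsWithin] with z hz h
      have hzpos : 0 < z - x := sub_pos.mpr hz
      have hstep : ψ z - ψ x ≤ (a z * G z - b) * Real.exp (-(I x)) := by
        have := hψle z
        rw [hψx]
        nlinarith [this]
      calc (z - x)⁻¹ * (ψ z - ψ x)
          ≤ (z - x)⁻¹ * ((a z * G z - b) * Real.exp (-(I x))) :=
            mul_le_mul_of_nonneg_left hstep (inv_nonneg.mpr hzpos.le)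
        _ = Real.exp (-(I x)) * ((z - x)⁻¹ * (a z * G z - b)) := by ring
        _ < r := h
    have := le_gronwallBound_of_liminf_deriv_right_le (f := ψ) (f' := fun _ => ε'')
      (δ := ψ 0) (K := 0) (ε := ε'') (a := 0) (b := T)
      (hψcont.continuousOn) hf' le_rfl
      (fun x _ => by simp) T (Set.mem_Icc.mpr ⟨hT, le_rfl⟩)
    rw [gronwallBound_K0] at this
    simpa using this
  -- let ε'' → 0
  have hψT : ψ T ≤ ψ 0 := by
    refine le_of_forall_pos_le_add fun ε hε => ?_
    have := key (ε / (T + 1)) (by positivity)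
    have hfrac : ε / (T + 1) * T ≤ ε := by
      rw [div_mul_eq_mul_div, div_le_iff₀ (by linarith)]
      nlinarith
    linarith
  -- unfold ψ
  have hI0 : I 0 = 0 := intervalIntegral.integral_same
  have h1 : ψ T = P.ν (η T) * Real.exp (-(I T)) := rfl
  have h2 : ψ 0 = P.ν (η 0) := by
    rw [hψdef]; simp [hI0]
  rw [h1, h2] at hψT
  have hep : 0 < Real.exp (-(I T)) := Real.exp_pos _
  calc P.ν (η T) = P.ν (η T) * Real.exp (-(I T)) * Real.exp (I T) := by
        rw [mul_assoc, ← Real.exp_add]; simp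
    _ ≤ P.ν (η 0) * Real.exp (I T) :=
        mul_le_mul_of_nonneg_right hψT (Real.exp_pos _).le
    _ = Real.exp (I T) * P.ν (η 0) := mul_comm _ _

end NormPack

section Flow

variable {n : ℕ}

/-- Averaged Jacobian along the segment from `p` to `q`. -/
noncomputable def Aav (Jf : (Fin n → ℝ) → Matrix (Fin n) (Fin n) ℝ)
    (p q : Fin n → ℝ) : Matrix (Fin n) (Fin n) ℝ :=
  Matrix.of fun i j => ∫ r in (0:ℝ)..1, Jf (p + r • (q - p)) i j

variable {f : (Fin n → ℝ) → (Fin n → ℝ)} {Jf : (Fin n → ℝ) → Matrix (Fin n) (Fin n) ℝ}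

lemma line_hasDerivAt
    (hf : ∀ v, HasFDerivAt f (LinearMap.toContinuousLinearMap (Jf v).mulVecLin) v)
    (p w : Fin n → ℝ) (r : ℝ) :
    HasDerivAt (fun r : ℝ => f (p + r • w)) ((Jf (p + r • w)).mulVec w) r := by
  have hline : HasDerivAt (fun r : ℝ => p + r • w) w r := by
    have h1 : HasDerivAt (fun r : ℝ => r • w) ((1:ℝ) • w) r := (hasDerivAt_id r).smul_const w
    rw [one_smul] at h1
    exact h1.const_add p
  have := (hf (p + r • w)).comp_hasDerivAt r hline
  simpa [Function.comp_def] using this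

lemma line_hasDerivAt_entry
    (hf : ∀ v, HasFDerivAt f (LinearMap.toContinuousLinearMap (Jf v).mulVecLin) v)
    (p w : Fin n → ℝ) (r : ℝ) (i : Fin n) :
    HasDerivAt (fun r : ℝ => f (p + r • w) i) ((Jf (p + r • w)).mulVec w i) r := by
  have h := line_hasDerivAt hf p w r
  have := (ContinuousLinearMap.proj (R := ℝ) (φ := fun _ : Fin n => ℝ) i).hasFDerivAt.comp_hasDerivAt
    r h
  simpa [Function.comp_def] using this

lemma line_cont (hJf : ∀ i j, Continuous fun v => Jf v i j) (p w : Fin n → ℝ) (i j : Fin n) :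
    Continuous fun r : ℝ => Jf (p + r • w) i j :=
  (hJf i j).comp (continuous_const.add (continuous_id.smul continuous_const))

lemma Aav_mulVec
    (hf : ∀ v, HasFDerivAt f (LinearMap.toContinuousLinearMap (Jf v).mulVecLin) v)
    (hJf : ∀ i j, Continuous fun v => Jf v i j)
    (p q : Fin n → ℝ) :
    (Aav Jf p q).mulVec (q - p) = f q - f p := by
  funext i
  set w := q - p with hw
  have hint : ∀ j, IntervalIntegrable (fun r => Jf (p + r • w) i j * w j)
      MeasureTheory.volume (0:ℝ) 1 :=
    fun j => ((line_cont hJf p w i j).mul continuous_const).intervalIntegrable _ _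
  have step1 : (Aav Jf p q).mulVec w i = ∑ j, (∫ r in (0:ℝ)..1, Jf (p + r • w) i j) * w j := by
    simp [Matrix.mulVec, dotProduct, Aav]
    rfl
  have step2 : ∀ j, (∫ r in (0:ℝ)..1, Jf (p + r • w) i j) * w j
      = ∫ r in (0:ℝ)..1, Jf (p + r • w) i j * w j := by
    intro j
    rw [← intervalIntegral.integral_mul_const]
  have step3 : ∑ j, ∫ r in (0:ℝ)..1, Jf (p + r • w) i j * w j
      = ∫ r in (0:ℝ)..1, ∑ j, Jf (p + r • w) i j * w j := by
    rw [intervalIntegral.integral_finset_sum (fun j _ => hint j)]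
  have step4 : ∀ r : ℝ, ∑ j, Jf (p + r • w) i j * w j = (Jf (p + r • w)).mulVec w i := by
    intro r; simp [Matrix.mulVec, dotProduct]
  have step5 : (∫ r in (0:ℝ)..1, (Jf (p + r • w)).mulVec w i) = f q i - f p i := by
    have hderiv : ∀ r ∈ Set.uIcc (0:ℝ) 1, HasDerivAt (fun r : ℝ => f (p + r • w) i)
        ((Jf (p + r • w)).mulVec w i) r := fun r _ => line_hasDerivAt_entry hf p w r i
    have hintg : IntervalIntegrable (fun r => (Jf (p + r • w)).mulVec w i)
        MeasureTheory.volume (0:ℝ) 1 := by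
      have : Continuous fun r : ℝ => (Jf (p + r • w)).mulVec w i := by
        have : Continuous fun r : ℝ => ∑ j, Jf (p + r • w) i j * w j := by
          apply continuous_finset_sum
          intro j _
          exact (line_cont hJf p w i j).mul continuous_const
        refine this.congr fun r => ?_
        rw [step4]
      exact this.intervalIntegrable _ _
    have := intervalIntegral.integral_eq_sub_of_hasDerivAt hderiv hintg
    rw [this]
    have h1 : p + (1:ℝ) • w = q := by rw [one_smul, hw]; abel
    have h0 : p + (0:ℝ) • w = p := by rw [zero_smul, add_zero]
    rw [h1, h0]
  calc (Aav Jf p q).mulVec w i = ∑ j, (∫ r in (0:ℝ)..1, Jf (p + r • w) i j) * w j := step1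
    _ = ∑ j, ∫ r in (0:ℝ)..1, Jf (p + r • w) i j * w j := by
        exact Finset.sum_congr rfl fun j _ => step2 j
    _ = ∫ r in (0:ℝ)..1, ∑ j, Jf (p + r • w) i j * w j := step3
    _ = ∫ r in (0:ℝ)..1, (Jf (p + r • w)).mulVec w i := by
        exact intervalIntegral.integral_congr fun r _ => step4 r
    _ = f q i - f p i := step5
    _ = (f q - f p) i := rfl

lemma Aav_entry_near
    (hJf : ∀ i j, Continuous fun v => Jf v i j)
    (p q : Fin n → ℝ) (B : Matrix (Fin n) (Fin n) ℝ) {c : ℝ} (i j : Fin n)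
    (hB : ∀ r ∈ Set.Icc (0:ℝ) 1, |Jf (p + r • (q - p)) i j - B i j| ≤ c) :
    |Aav Jf p q i j - B i j| ≤ c := by
  set w := q - p with hw
  have hAij : Aav Jf p q i j = ∫ r in (0:ℝ)..1, Jf (p + r • w) i j := rfl
  have hBij : B i j = ∫ r in (0:ℝ)..1, B i j := by
    rw [intervalIntegral.integral_const]; simp
  have hsub : Aav Jf p q i j - B i j = ∫ r in (0:ℝ)..1, (Jf (p + r • w) i j - B i j) := by
    rw [hAij, intervalIntegral.integral_sub ((line_cont hJf p w i j).intervalIntegrable _ _)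
      (intervalIntegrable_const)]
    rw [← hBij]
  rw [hsub]
  have := intervalIntegral.norm_integral_le_of_norm_le_const
    (f := fun r => Jf (p + r • w) i j - B i j) (a := (0:ℝ)) (b := 1) (C := c) ?_
  · simpa using this
  · intro r hr
    have hr' : r ∈ Set.Icc (0:ℝ) 1 := by
      rcases hr with ⟨h1, h2⟩
      simp at h1 h2 ⊢
      constructor
      · linarith [h1]
      · exact h2
    simpa using hB r hr'

end Flow

section Flow2

variable {n : ℕ} {f : (Fin n → ℝ) → (Fin n → ℝ)}
  {Jf : (Fin n → ℝ) → Matrix (Fin n) (Fin n) ℝ}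
  {ξ : ℝ → (Fin n → ℝ) → (Fin n → ℝ)}

lemma pair_est (P : NormPack n)
    (μ : Matrix (Fin n) (Fin n) ℝ → ℝ) (hμ : ∀ M, IsMatrixMeasure P.ν M (μ M))
    (hf : ∀ v, HasFDerivAt f (LinearMap.toContinuousLinearMap (Jf v).mulVecLin) v)
    (hJf : ∀ i j, Continuous fun v => Jf v i j)
    (hξ0 : ∀ x, ξ 0 x = x)
    (hξ : ∀ x t, HasDerivAt (fun s => ξ s x) (f (ξ t x)) t)
    (p q : Fin n → ℝ) (T : ℝ) (hT : 0 ≤ T) (m : ℝ → ℝ) (hm : Continuous m)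
    (hbound : ∀ s ∈ Set.Icc (0:ℝ) T, μ (Aav Jf (ξ s p) (ξ s q)) ≤ m s) :
    P.ν (ξ T q - ξ T p) ≤ Real.exp (∫ s in (0:ℝ)..T, m s) * P.ν (q - p) := by
  have hη : ∀ s, HasDerivAt (fun s => ξ s q - ξ s p)
      ((Aav Jf (ξ s p) (ξ s q)).mulVec (ξ s q - ξ s p)) s := by
    intro s
    have h := (hξ q s).sub (hξ p s)
    rw [Aav_mulVec hf hJf (ξ s p) (ξ s q)]
    exact h
  have := P.gronwall_mu μ hμ (fun s => ξ s q - ξ s p)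
    (fun s => Aav Jf (ξ s p) (ξ s q)) m T hT hη hm hbound
  simpa [hξ0] using this

lemma flow_close (P : NormPack n)
    (μ : Matrix (Fin n) (Fin n) ℝ → ℝ) (hμ : ∀ M, IsMatrixMeasure P.ν M (μ M))
    (hf : ∀ v, HasFDerivAt f (LinearMap.toContinuousLinearMap (Jf v).mulVecLin) v)
    (hJf : ∀ i j, Continuous fun v => Jf v i j)
    (hξ0 : ∀ x, ξ 0 x = x)
    (hξ : ∀ x t, HasDerivAt (fun s => ξ s x) (f (ξ t x)) t)
    (a : Fin n → ℝ) (T : ℝ) (hT : 0 ≤ T) {ρ : ℝ} (hρ0 : 0 < ρ) (hρ1 : ρ ≤ 1) :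
    ∃ δ0 > 0, ∀ b, P.ν (b - a) ≤ δ0 →
      ∀ s ∈ Set.Icc (0:ℝ) T, ‖ξ s b - ξ s a‖ ≤ ρ := by
  have hξcont : ∀ c : Fin n → ℝ, Continuous fun s => ξ s c := fun c =>
    continuous_iff_continuousAt.mpr fun s => (hξ c s).continuousAt
  set Ka : Set (Fin n → ℝ) := (fun s => ξ s a) '' Set.Icc 0 T with hKa
  have hKacomp : IsCompact Ka := (isCompact_Icc).image (hξcont a)
  have hKane : Ka.Nonempty := ⟨ξ 0 a, 0, Set.mem_Icc.mpr ⟨le_rfl, hT⟩, rfl⟩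
  set Ta : Set (Fin n → ℝ) := Metric.cthickening 1 Ka with hTa
  have hTacomp : IsCompact Ta := hKacomp.cthickening
  have hKaTa : Ka ⊆ Ta := Metric.self_subset_cthickening _
  set c : Fin n → Fin n → ℝ := fun i j => sSup ((fun w => |Jf w i j|) '' Ta) with hc
  have hcle : ∀ i j, ∀ w ∈ Ta, |Jf w i j| ≤ c i j := by
    intro i j w hw
    exact le_csSup (hTacomp.bddAbove_image ((hJf i j).abs.continuousOn)) ⟨w, hw, rfl⟩
  have hcnn : ∀ i j, 0 ≤ c i j := by
    intro i j
    obtain ⟨w, hw⟩ := hKane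
    exact le_trans (abs_nonneg _) (hcle i j w (hKaTa hw))
  set Lf : ℝ := ∑ i, ∑ j, c i j with hLf
  have hLfnn : 0 ≤ Lf := Finset.sum_nonneg fun i _ => Finset.sum_nonneg fun j _ => hcnn i j
  set L : ℝ := P.C2 / P.C1 * Lf with hL
  have hLnn : 0 ≤ L := by
    have h1 : 0 < P.C2 / P.C1 := div_pos P.hC2 P.hC1
    positivity
  -- key estimate assuming the tube condition
  have key : ∀ b, ∀ s ∈ Set.Icc (0:ℝ) T,
      (∀ u ∈ Set.Icc (0:ℝ) s, ‖ξ u b - ξ u a‖ ≤ 1) →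
      P.ν (ξ s b - ξ s a) ≤ Real.exp (L * s) * P.ν (b - a) := by
    intro b s hs htube
    have hbound : ∀ u ∈ Set.Icc (0:ℝ) s, μ (Aav Jf (ξ u a) (ξ u b)) ≤ L := by
      intro u hu
      have hseg : ∀ r ∈ Set.Icc (0:ℝ) 1,
          ξ u a + r • (ξ u b - ξ u a) ∈ Ta := by
        intro r hr
        have hmem : ξ u a ∈ Ka := ⟨u, Set.mem_Icc.mpr ⟨hu.1, hu.2.trans hs.2⟩, rfl⟩
        apply Metric.mem_cthickening_of_dist_le _ (ξ u a) 1 _ hmem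
        calc dist (ξ u a + r • (ξ u b - ξ u a)) (ξ u a)
            = ‖r • (ξ u b - ξ u a)‖ := by rw [dist_eq_norm]; congr 1; abel
          _ = |r| * ‖ξ u b - ξ u a‖ := by rw [norm_smul, Real.norm_eq_abs]
          _ ≤ 1 * 1 := by
              apply mul_le_mul _ (htube u hu) (norm_nonneg _) zero_le_one
              rw [abs_of_nonneg hr.1]; exact hr.2
          _ = 1 := one_mul 1
      have hent : NormPack.ent (Aav Jf (ξ u a) (ξ u b)) ≤ Lf := by
        refine Finset.sum_le_sum fun i _ => Finset.sum_le_sum fun j _ => ?_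
        have := Aav_entry_near hJf (ξ u a) (ξ u b) 0 i j
          (fun r hr => by simpa using hcle i j _ (hseg r hr))
        simpa using this
      calc μ (Aav Jf (ξ u a) (ξ u b)) ≤ |μ (Aav Jf (ξ u a) (ξ u b))| := le_abs_self _
        _ ≤ P.op (Aav Jf (ξ u a) (ξ u b)) := P.abs_mu_le (hμ _)
        _ ≤ P.C2 / P.C1 * NormPack.ent (Aav Jf (ξ u a) (ξ u b)) := P.op_le_ent _
        _ ≤ L := by
            rw [hL]
            exact mul_le_mul_of_nonneg_left hent (div_pos P.hC2 P.hC1).le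
    have := pair_est P μ hμ hf hJf hξ0 hξ a b s hs.1 (fun _ => L) continuous_const hbound
    have hint : (∫ _ in (0:ℝ)..s, L) = L * s := by
      rw [intervalIntegral.integral_const]; simp [mul_comm]
    rwa [hint] at this
  -- choose δ0
  refine ⟨P.C1 * ρ / (2 * Real.exp (L * T)), by have h1 := P.hC1; positivity, ?_⟩
  intro b hb
  by_contra hcon
  push_neg at hcon
  obtain ⟨s₀, hs₀, hs₀ρ⟩ := hcon
  set u : ℝ → ℝ := fun s => ‖ξ s b - ξ s a‖ with hu
  have hucont : Continuous u := ((hξcont b).sub (hξcont a)).norm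
  set S : Set ℝ := {s ∈ Set.Icc (0:ℝ) T | ρ ≤ u s} with hS
  have hSclosed : IsClosed S := by
    apply IsClosed.inter isClosed_Icc
    exact isClosed_le continuous_const hucont
  have hSne : S.Nonempty := ⟨s₀, hs₀, hs₀ρ.le⟩
  have hSbdd : BddBelow S := ⟨0, fun z hz => hz.1.1⟩
  set sstar := sInf S with hsstar
  have hsmem : sstar ∈ S := hSclosed.csInf_mem hSne hSbdd
  have hexpT : ∀ s ∈ Set.Icc (0:ℝ) T, Real.exp (L * s) ≤ Real.exp (L * T) := by
    intro s hs
    exact Real.exp_le_exp.mpr (mul_le_mul_of_nonneg_left hs.2 hLnn)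
  have hνsmall : ∀ s ∈ Set.Icc (0:ℝ) T, Real.exp (L * s) * P.ν (b - a) < P.C1 * ρ := by
    intro s hs
    have h1 : Real.exp (L * s) * P.ν (b - a) ≤ Real.exp (L * T) * (P.C1 * ρ / (2 * Real.exp (L * T))) := by
      apply mul_le_mul (hexpT s hs) hb (P.nonneg _) (Real.exp_pos _).le
    have h2 : Real.exp (L * T) * (P.C1 * ρ / (2 * Real.exp (L * T))) = P.C1 * ρ / 2 := by
      field_simp
    rw [h2] at h1
    nlinarith [P.hC1, hρ0]
  have hu0 : u 0 < ρ := by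
    have h1 : P.C1 * u 0 ≤ P.ν (b - a) := by
      have := P.lower (b - a)
      simpa [hu, hξ0] using this
    have h2 := hνsmall 0 (Set.mem_Icc.mpr ⟨le_rfl, hT⟩)
    simp only [mul_zero, Real.exp_zero, one_mul] at h2
    nlinarith [P.hC1]
  have hspos : 0 < sstar := by
    rcases lt_or_eq_of_le hsmem.1.1 with h | h
    · exact h
    · exfalso; rw [← h] at hsmem; exact absurd hsmem.2 (not_le.mpr hu0)
  have hbelow : ∀ z, 0 ≤ z → z < sstar → u z < ρ := by
    intro z hz0 hzs
    by_contra hge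
    push_neg at hge
    have hzS : z ∈ S := ⟨Set.mem_Icc.mpr ⟨hz0, hzs.le.trans hsmem.1.2⟩, hge⟩
    exact absurd (csInf_le hSbdd hzS) (not_le.mpr hzs)
  have hustar : u sstar ≤ ρ := by
    have htend : Tendsto u (𝓝[<] sstar) (𝓝 (u sstar)) :=
      (hucont.tendsto sstar).mono_left nhdsWithin_le_nhds
    refine le_of_tendsto htend ?_
    filter_upwards [Ioo_mem_nhdsLT_of_mem (Set.mem_Ioc.mpr ⟨hspos, le_rfl⟩)] with z hz
    exact (hbelow z hz.1.le hz.2).le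
  have htube : ∀ w ∈ Set.Icc (0:ℝ) sstar, u w ≤ 1 := by
    intro w hw
    rcases lt_or_eq_of_le hw.2 with h | h
    · exact (hbelow w hw.1 h).le.trans hρ1
    · rw [h]; exact hustar.trans hρ1
  have hkey := key b sstar hsmem.1 htube
  have hlt := hνsmall sstar hsmem.1
  have hC1u : P.C1 * u sstar ≤ P.ν (ξ sstar b - ξ sstar a) := P.lower _
  have : u sstar < ρ := by nlinarith [P.hC1]
  exact absurd hsmem.2 (not_le.mpr this)

end Flow2

section Flow3

variable {n : ℕ} {f : (Fin n → ℝ) → (Fin n → ℝ)}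
  {Jf : (Fin n → ℝ) → Matrix (Fin n) (Fin n) ℝ}
  {ξ : ℝ → (Fin n → ℝ) → (Fin n → ℝ)}

lemma local_est (P : NormPack n)
    (μ : Matrix (Fin n) (Fin n) ℝ → ℝ) (hμ : ∀ M, IsMatrixMeasure P.ν M (μ M))
    (hf : ∀ v, HasFDerivAt f (LinearMap.toContinuousLinearMap (Jf v).mulVecLin) v)
    (hJf : ∀ i j, Continuous fun v => Jf v i j)
    (hξ0 : ∀ x, ξ 0 x = x)
    (hξ : ∀ x t, HasDerivAt (fun s => ξ s x) (f (ξ t x)) t)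
    (a : Fin n → ℝ) (T : ℝ) (hT : 0 ≤ T) {ε : ℝ} (hε : 0 < ε) :
    ∃ δ0 > 0, ∀ p q, P.ν (p - a) ≤ δ0 → P.ν (q - a) ≤ δ0 →
      (P.ν (ξ T q - ξ T p) ≤
        Real.exp ((∫ s in (0:ℝ)..T, μ (Jf (ξ s p))) + ε * T) * P.ν (q - p))
      ∧ |(∫ s in (0:ℝ)..T, μ (Jf (ξ s p))) - ∫ s in (0:ℝ)..T, μ (Jf (ξ s a))| ≤ ε * T := by
  have hξcont : ∀ c : Fin n → ℝ, Continuous fun s => ξ s c := fun c =>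
    continuous_iff_continuousAt.mpr fun s => (hξ c s).continuousAt
  set Ka : Set (Fin n → ℝ) := (fun s => ξ s a) '' Set.Icc 0 T with hKa
  have hKacomp : IsCompact Ka := (isCompact_Icc).image (hξcont a)
  set Ta : Set (Fin n → ℝ) := Metric.cthickening 1 Ka with hTa
  have hTacomp : IsCompact Ta := hKacomp.cthickening
  have hKaTa : Ka ⊆ Ta := Metric.self_subset_cthickening _
  -- uniform continuity of the Jacobian on the tube
  set g : (Fin n → ℝ) → (Fin n → Fin n → ℝ) := fun w i j => Jf w i j with hg
  have hgcont : Continuous g := continuous_pi fun i => continuous_pi fun j => hJf i j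
  have hunif : UniformContinuousOn g Ta :=
    hTacomp.uniformContinuousOn_of_continuous hgcont.continuousOn
  set ε₂ : ℝ := ε * P.C1 / (P.C2 * ((n:ℝ)^2 + 1)) with hε₂
  have hε₂pos : 0 < ε₂ := by
    have := P.hC1; have := P.hC2
    positivity
  have hε₂key : P.C2 / P.C1 * ((n:ℝ)^2 * ε₂) ≤ ε := by
    have hc1 : (0:ℝ) < P.C1 := P.hC1
    have hc2 : (0:ℝ) < P.C2 := P.hC2
    have hn1 : (0:ℝ) < (n:ℝ)^2 + 1 := by positivity
    have hx : P.C2 / P.C1 * ((n:ℝ)^2 * ε₂) = ε * ((n:ℝ)^2 / ((n:ℝ)^2 + 1)) := by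
      rw [hε₂]; field_simp
    rw [hx]
    have h1 : (n:ℝ)^2 / ((n:ℝ)^2 + 1) ≤ 1 := by
      rw [div_le_one hn1]; linarith
    nlinarith
  obtain ⟨δ₁, hδ₁pos, hδ₁⟩ := Metric.uniformContinuousOn_iff_le.mp hunif ε₂ hε₂pos
  -- entrywise consequence
  have hJclose : ∀ w w', w ∈ Ta → w' ∈ Ta → dist w w' ≤ min δ₁ 1 →
      ∀ i j, |Jf w i j - Jf w' i j| ≤ ε₂ := by
    intro w w' hw hw' hd i j
    have := hδ₁ w hw w' hw' (hd.trans (min_le_left _ _))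
    have hentry : |Jf w i j - Jf w' i j| ≤ dist (g w) (g w') := by
      rw [dist_eq_norm]
      calc |Jf w i j - Jf w' i j| = ‖(g w - g w') i j‖ := by rw [Real.norm_eq_abs]; rfl
        _ ≤ ‖(g w - g w') i‖ := norm_le_pi_norm _ j
        _ ≤ ‖g w - g w'‖ := norm_le_pi_norm _ i
    linarith
  set ρ : ℝ := min (min δ₁ 1 / 2) (1/3) with hρ
  have hρpos : 0 < ρ := by
    apply lt_min
    · have : (0:ℝ) < min δ₁ 1 := lt_min hδ₁pos one_pos
      linarith
    · norm_num
  have hρ1 : ρ ≤ 1 := le_trans (min_le_right _ _) (by norm_num)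
  obtain ⟨δ0, hδ0pos, hδ0⟩ := flow_close P μ hμ hf hJf hξ0 hξ a T hT hρpos hρ1
  refine ⟨δ0, hδ0pos, ?_⟩
  intro p q hp hq
  have hclosep : ∀ s ∈ Set.Icc (0:ℝ) T, ‖ξ s p - ξ s a‖ ≤ ρ := hδ0 p hp
  have hcloseq : ∀ s ∈ Set.Icc (0:ℝ) T, ‖ξ s q - ξ s a‖ ≤ ρ := hδ0 q hq
  have hpTa : ∀ s ∈ Set.Icc (0:ℝ) T, ξ s p ∈ Ta := by
    intro s hs
    have hmem : ξ s a ∈ Ka := ⟨s, hs, rfl⟩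
    apply Metric.mem_cthickening_of_dist_le _ (ξ s a) 1 _ hmem
    rw [dist_eq_norm]
    exact (hclosep s hs).trans hρ1
  -- segment points are in the tube and close to ξ s p
  have hseg : ∀ s ∈ Set.Icc (0:ℝ) T, ∀ r ∈ Set.Icc (0:ℝ) 1,
      (ξ s p + r • (ξ s q - ξ s p)) ∈ Ta ∧
      dist (ξ s p + r • (ξ s q - ξ s p)) (ξ s p) ≤ min δ₁ 1 := by
    intro s hs r hr
    have hpq : ‖ξ s q - ξ s p‖ ≤ 2 * ρ := by
      have : ξ s q - ξ s p = (ξ s q - ξ s a) - (ξ s p - ξ s a) := by abel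
      rw [this]
      calc ‖(ξ s q - ξ s a) - (ξ s p - ξ s a)‖ ≤ ‖ξ s q - ξ s a‖ + ‖ξ s p - ξ s a‖ :=
            norm_sub_le _ _
        _ ≤ ρ + ρ := add_le_add (hcloseq s hs) (hclosep s hs)
        _ = 2 * ρ := by ring
    have hdistp : dist (ξ s p + r • (ξ s q - ξ s p)) (ξ s p) ≤ 2 * ρ := by
      calc dist (ξ s p + r • (ξ s q - ξ s p)) (ξ s p) = ‖r • (ξ s q - ξ s p)‖ := by
            rw [dist_eq_norm]; congr 1; abel
        _ = |r| * ‖ξ s q - ξ s p‖ := by rw [norm_smul, Real.norm_eq_abs]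
        _ ≤ 1 * (2 * ρ) := mul_le_mul (by rw [abs_of_nonneg hr.1]; exact hr.2) hpq
            (norm_nonneg _) zero_le_one
        _ = 2 * ρ := one_mul _
    constructor
    · have hmem : ξ s a ∈ Ka := ⟨s, hs, rfl⟩
      apply Metric.mem_cthickening_of_dist_le _ (ξ s a) 1 _ hmem
      calc dist (ξ s p + r • (ξ s q - ξ s p)) (ξ s a)
          ≤ dist (ξ s p + r • (ξ s q - ξ s p)) (ξ s p) + dist (ξ s p) (ξ s a) :=
            dist_triangle _ _ _
        _ ≤ 2 * ρ + ρ := by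
            apply add_le_add hdistp
            rw [dist_eq_norm]; exact hclosep s hs
        _ = 3 * ρ := by ring
        _ ≤ 1 := by
            have : ρ ≤ 1/3 := min_le_right _ _
            linarith
    · calc dist (ξ s p + r • (ξ s q - ξ s p)) (ξ s p) ≤ 2 * ρ := hdistp
        _ ≤ min δ₁ 1 := by
            have : ρ ≤ min δ₁ 1 / 2 := min_le_left _ _
            linarith
  -- bound on the averaged Jacobian
  have hAavbound : ∀ s ∈ Set.Icc (0:ℝ) T,
      μ (Aav Jf (ξ s p) (ξ s q)) ≤ μ (Jf (ξ s p)) + ε := by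
    intro s hs
    have hent : ∀ i j, |Aav Jf (ξ s p) (ξ s q) i j - Jf (ξ s p) i j| ≤ ε₂ := by
      intro i j
      apply Aav_entry_near hJf (ξ s p) (ξ s q) (Jf (ξ s p)) i j
      intro r hr
      obtain ⟨hmem, hdist⟩ := hseg s hs r hr
      exact hJclose _ _ hmem (hpTa s hs) hdist i j
    have hentle : NormPack.ent (Aav Jf (ξ s p) (ξ s q) - Jf (ξ s p)) ≤ (n:ℝ)^2 * ε₂ := by
      apply NormPack.ent_le_of_entries_le
      intro i j
      exact hent i j
    have h1 := P.mu_le (hμ (Aav Jf (ξ s p) (ξ s q))) (hμ (Jf (ξ s p)))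
    have h2 := P.op_le_ent (Aav Jf (ξ s p) (ξ s q) - Jf (ξ s p))
    have h3 : P.C2 / P.C1 * NormPack.ent (Aav Jf (ξ s p) (ξ s q) - Jf (ξ s p))
        ≤ P.C2 / P.C1 * ((n:ℝ)^2 * ε₂) :=
      mul_le_mul_of_nonneg_left hentle (div_pos P.hC2 P.hC1).le
    linarith [hε₂key]
  -- first conclusion via pair_est
  have hmcont : Continuous fun s => μ (Jf (ξ s p)) + ε := by
    apply Continuous.add _ continuous_const
    exact P.continuous_mu_comp μ hμ (fun s => Jf (ξ s p))
      (fun i j => (hJf i j).comp (hξcont p))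
  have hmain := pair_est P μ hμ hf hJf hξ0 hξ p q T hT
    (fun s => μ (Jf (ξ s p)) + ε) hmcont hAavbound
  have hintsplit : (∫ s in (0:ℝ)..T, (μ (Jf (ξ s p)) + ε))
      = (∫ s in (0:ℝ)..T, μ (Jf (ξ s p))) + ε * T := by
    rw [intervalIntegral.integral_add
      ((P.continuous_mu_comp μ hμ (fun s => Jf (ξ s p))
        (fun i j => (hJf i j).comp (hξcont p))).intervalIntegrable _ _)
      (intervalIntegrable_const)]
    rw [intervalIntegral.integral_const]
    simp [mul_comm]
  rw [hintsplit] at hmain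
  refine ⟨hmain, ?_⟩
  -- second conclusion: continuity of the integral
  have haTa : ∀ s ∈ Set.Icc (0:ℝ) T, ξ s a ∈ Ta := fun s hs => hKaTa ⟨s, hs, rfl⟩
  have hdiff : ∀ s ∈ Set.Icc (0:ℝ) T, |μ (Jf (ξ s p)) - μ (Jf (ξ s a))| ≤ ε := by
    intro s hs
    have h1 := P.mu_dist_le (hμ (Jf (ξ s p))) (hμ (Jf (ξ s a)))
    have h2 : NormPack.ent (Jf (ξ s p) - Jf (ξ s a)) ≤ (n:ℝ)^2 * ε₂ := by
      apply NormPack.ent_le_of_entries_le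
      intro i j
      apply hJclose _ _ (hpTa s hs) (haTa s hs)
      · rw [dist_eq_norm]
        exact (hclosep s hs).trans ((le_trans (min_le_left _ _) (by linarith [lt_min hδ₁pos one_pos] : min δ₁ 1 / 2 ≤ min δ₁ 1)))
    have h3 : P.C2 / P.C1 * NormPack.ent (Jf (ξ s p) - Jf (ξ s a))
        ≤ P.C2 / P.C1 * ((n:ℝ)^2 * ε₂) :=
      mul_le_mul_of_nonneg_left h2 (div_pos P.hC2 P.hC1).le
    linarith [hε₂key]
  have hintdiff : (∫ s in (0:ℝ)..T, μ (Jf (ξ s p))) - (∫ s in (0:ℝ)..T, μ (Jf (ξ s a)))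
      = ∫ s in (0:ℝ)..T, (μ (Jf (ξ s p)) - μ (Jf (ξ s a))) := by
    rw [intervalIntegral.integral_sub
      ((P.continuous_mu_comp μ hμ (fun s => Jf (ξ s p))
        (fun i j => (hJf i j).comp (hξcont p))).intervalIntegrable _ _)
      ((P.continuous_mu_comp μ hμ (fun s => Jf (ξ s a))
        (fun i j => (hJf i j).comp (hξcont a))).intervalIntegrable _ _)]
  rw [hintdiff]
  have := intervalIntegral.norm_integral_le_of_norm_le_const
    (f := fun s => μ (Jf (ξ s p)) - μ (Jf (ξ s a))) (a := (0:ℝ)) (b := T) (C := ε) ?_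
  · rw [Real.norm_eq_abs] at this
    calc |∫ s in (0:ℝ)..T, (μ (Jf (ξ s p)) - μ (Jf (ξ s a)))| ≤ ε * |T - 0| := this
      _ = ε * T := by rw [sub_zero, abs_of_nonneg hT]
  · intro s hs
    have hs' : s ∈ Set.Icc (0:ℝ) T := by
      rw [Set.uIoc_of_le hT] at hs
      exact ⟨hs.1.le, hs.2⟩
    rw [Real.norm_eq_abs]
    exact hdiff s hs'

end Flow3

section Build

variable {n : ℕ} {ν : (Fin n → ℝ) → ℝ}

lemma isNormOn_zero (hν : IsNormOn ν) : ν 0 = 0 := by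
  have := hν.2.2.1 0 0; simpa using this

lemma isNormOn_sum (hν : IsNormOn ν) {ι : Type*} (s : Finset ι) (g : ι → Fin n → ℝ) :
    ν (∑ i ∈ s, g i) ≤ ∑ i ∈ s, ν (g i) := by
  classical
  induction s using Finset.induction with
  | empty => simp [isNormOn_zero hν]
  | insert _ _ h ih =>
    rw [Finset.sum_insert h, Finset.sum_insert h]
    exact (hν.2.2.2 _ _).trans (by linarith)

lemma isNormOn_upper (hν : IsNormOn ν) :
    ∀ v, ν v ≤ ((∑ i, ν (Pi.single i 1)) + 1) * ‖v‖ := by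
  intro v
  have hsum : 0 ≤ ∑ i, ν (Pi.single i 1) := Finset.sum_nonneg fun i _ => hν.1 _
  have hdecomp : v = ∑ i, Pi.single i (v i) := (Finset.univ_sum_single v).symm
  have h1 : ν v ≤ ∑ i, ν (Pi.single i (v i)) := by
    conv_lhs => rw [hdecomp]
    exact isNormOn_sum hν _ _
  have h2 : ∀ i, ν (Pi.single i (v i)) ≤ ν (Pi.single i 1) * ‖v‖ := by
    intro i
    have hsingle : Pi.single i (v i) = (v i) • (Pi.single i (1:ℝ) : Fin n → ℝ) := by
      funext j
      by_cases hji : j = i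
      · subst hji; simp
      · simp [Pi.single_apply, hji]
    rw [hsingle, hν.2.2.1]
    have habs : |v i| ≤ ‖v‖ := by
      have := norm_le_pi_norm v i
      simpa using this
    calc |v i| * ν (Pi.single i 1) ≤ ‖v‖ * ν (Pi.single i 1) :=
          mul_le_mul_of_nonneg_right habs (hν.1 _)
      _ = ν (Pi.single i 1) * ‖v‖ := mul_comm _ _
  calc ν v ≤ ∑ i, ν (Pi.single i (v i)) := h1
    _ ≤ ∑ i, ν (Pi.single i 1) * ‖v‖ := Finset.sum_le_sum fun i _ => h2 i
    _ = (∑ i, ν (Pi.single i 1)) * ‖v‖ := by rw [← Finset.sum_mul]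
    _ ≤ ((∑ i, ν (Pi.single i 1)) + 1) * ‖v‖ :=
        mul_le_mul_of_nonneg_right (by linarith) (norm_nonneg v)

lemma isNormOn_continuous (hν : IsNormOn ν) : Continuous ν := by
  set C2 : ℝ := (∑ i, ν (Pi.single i 1)) + 1 with hC2
  have hC2pos : 0 < C2 := by
    have hsum : 0 ≤ ∑ i, ν (Pi.single i 1) := Finset.sum_nonneg fun i _ => hν.1 _
    rw [hC2]; linarith
  have hneg : ∀ v, ν (-v) = ν v := by
    intro v
    have := hν.2.2.1 (-1) v; simpa using this
  have habs : ∀ a b, |ν a - ν b| ≤ ν (a - b) := by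
    intro a b
    rw [abs_le]
    constructor
    · have h1 : ν b ≤ ν a + ν (b - a) := by
        have := hν.2.2.2 a (b - a); simpa using this
      have h2 : ν (b - a) = ν (a - b) := by
        rw [← hneg (b - a)]; congr 1; abel
      linarith [h2 ▸ h1]
    · have := hν.2.2.2 b (a - b); simp at this; linarith
  refine LipschitzWith.continuous (K := ⟨C2, hC2pos.le⟩) (LipschitzWith.of_dist_le_mul ?_)
  intro a b
  calc dist (ν a) (ν b) = |ν a - ν b| := Real.dist_eq _ _
    _ ≤ ν (a - b) := habs a b
    _ ≤ C2 * ‖a - b‖ := isNormOn_upper hν _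
    _ = ↑(⟨C2, hC2pos.le⟩ : NNReal) * dist a b := by rw [dist_eq_norm]

/-- Construct a `NormPack` from `IsNormOn` when `n ≠ 0`. -/
lemma isNormOn_pack (hν : IsNormOn ν) (hn : n ≠ 0) :
    ∃ P : NormPack n, P.ν = ν := by
  set C2 : ℝ := (∑ i, ν (Pi.single i 1)) + 1 with hC2
  have hC2pos : 0 < C2 := by
    have hsum : 0 ≤ ∑ i, ν (Pi.single i 1) := Finset.sum_nonneg fun i _ => hν.1 _
    rw [hC2]; linarith
  -- minimum on the unit sphere
  set S : Set (Fin n → ℝ) := Metric.sphere 0 1 with hS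
  have hScomp : IsCompact S := isCompact_sphere 0 1
  have i₀ : Fin n := ⟨0, Nat.pos_of_ne_zero hn⟩
  have hSne : S.Nonempty := by
    refine ⟨Pi.single i₀ 1, ?_⟩
    rw [hS, mem_sphere_zero_iff_norm, Pi.norm_single]
    simp
  obtain ⟨v₀, hv₀S, hmin⟩ := hScomp.exists_isMinOn hSne (isNormOn_continuous hν).continuousOn
  have hv₀norm : ‖v₀‖ = 1 := mem_sphere_zero_iff_norm.mp hv₀S
  have hv₀ne : v₀ ≠ 0 := by
    intro h; rw [h, norm_zero] at hv₀norm; exact one_ne_zero hv₀norm.symm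
  set C1 : ℝ := ν v₀ with hC1def
  have hC1pos : 0 < C1 := by
    rcases lt_or_eq_of_le (hν.1 v₀) with h | h
    · exact h
    · exact absurd ((hν.2.1 v₀).mp h.symm) hv₀ne
  have hlower : ∀ v, C1 * ‖v‖ ≤ ν v := by
    intro v
    by_cases hv : v = 0
    · subst hv; simp [isNormOn_zero hν]
    · have hvn : (0:ℝ) < ‖v‖ := norm_pos_iff.mpr hv
      set u := ‖v‖⁻¹ • v with hu
      have huS : u ∈ S := by
        rw [hS, mem_sphere_zero_iff_norm, hu, norm_smul]
        simp [abs_of_pos (inv_pos.mpr hvn), inv_mul_cancel₀ (ne_of_gt hvn)]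
      have h1 : ν v₀ ≤ ν u := hmin huS
      have h2 : ν u = ‖v‖⁻¹ * ν v := by
        rw [hu, hν.2.2.1, abs_of_pos (inv_pos.mpr hvn)]
      rw [h2] at h1
      rw [hC1def]
      calc ν v₀ * ‖v‖ ≤ ‖v‖⁻¹ * ν v * ‖v‖ := mul_le_mul_of_nonneg_right h1 hvn.le
        _ = ν v := by field_simp
  have hexu : ∃ v, ν v = 1 := by
    refine ⟨(ν v₀)⁻¹ • v₀, ?_⟩
    rw [hν.2.2.1, abs_of_pos (inv_pos.mpr hC1pos)]
    exact inv_mul_cancel₀ (ne_of_gt hC1pos)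
  exact ⟨⟨ν, C1, C2, hC1pos, hC2pos, hν.1, hν.2.2.1, hν.2.2.2, hlower,
    isNormOn_upper hν, hexu⟩, rfl⟩

end Build

/-- `|ξ(t,x̄) − ξ(t,x)| ≤ exp( max_{v∈[x,x̄]} ∫₀ᵗ μ(Jf(ξ(s,v))) ds ) |x̄ − x|`
for the flow `ξ` of a `C¹` vector field `f` with Jacobian `Jf`. -/
theorem solution_dist_upper_bound {n : ℕ} (ν : (Fin n → ℝ) → ℝ) (hν : IsNormOn ν)
    (μ : Matrix (Fin n) (Fin n) ℝ → ℝ) (hμ : ∀ M, IsMatrixMeasure ν M (μ M))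
    (f : (Fin n → ℝ) → (Fin n → ℝ)) (Jf : (Fin n → ℝ) → Matrix (Fin n) (Fin n) ℝ)
    (hf : ∀ v, HasFDerivAt f (LinearMap.toContinuousLinearMap (Jf v).mulVecLin) v)
    (hJf : ∀ i j, Continuous fun v => Jf v i j)
    (ξ : ℝ → (Fin n → ℝ) → (Fin n → ℝ))
    (hξ0 : ∀ x, ξ 0 x = x)
    (hξ : ∀ x t, HasDerivAt (fun s => ξ s x) (f (ξ t x)) t)
    (x xbar : Fin n → ℝ) (t : ℝ) (ht : 0 ≤ t) :
    ν (ξ t xbar - ξ t x) ≤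
      Real.exp (⨆ v : segment ℝ x xbar, ∫ s in (0:ℝ)..t, μ (Jf (ξ s ↑v))) *
        ν (xbar - x) := by
  by_cases hn : n = 0
  · subst hn
    have h0 : ξ t xbar - ξ t x = 0 := funext fun i => i.elim0
    rw [h0, isNormOn_zero hν]
    exact mul_nonneg (Real.exp_pos _).le (hν.1 _)
  obtain ⟨P, hP⟩ := isNormOn_pack hν hn
  subst hP
  set F : (Fin n → ℝ) → ℝ := fun v => ∫ s in (0:ℝ)..t, μ (Jf (ξ s v)) with hF
  have hsegcomp : IsCompact (segment ℝ x xbar) := by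
    rw [segment_eq_image']
    exact isCompact_Icc.image (continuous_const.add (continuous_id.smul continuous_const))
  have hxseg : x ∈ segment ℝ x xbar := left_mem_segment ℝ x xbar
  -- continuity of F
  have hFcont : Continuous F := by
    rw [Metric.continuous_iff]
    intro a ε' hε'
    have hε₀pos : 0 < ε' / (2 * (t + 1)) := by positivity
    obtain ⟨δ0, hδ0pos, hδ0⟩ := local_est P μ hμ hf hJf hξ0 hξ a t ht hε₀pos
    refine ⟨δ0 / P.C2, div_pos hδ0pos P.hC2, ?_⟩
    intro b hb
    have h1 : P.ν (b - a) ≤ δ0 := by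
      calc P.ν (b - a) ≤ P.C2 * ‖b - a‖ := P.upper _
        _ = P.C2 * dist b a := by rw [dist_eq_norm]
        _ ≤ P.C2 * (δ0 / P.C2) := mul_le_mul_of_nonneg_left hb.le P.hC2.le
        _ = δ0 := by
            rw [mul_div_assoc']
            exact mul_div_cancel_left₀ _ (ne_of_gt P.hC2)
    have h2 : P.ν (a - a) ≤ δ0 := by
      simp only [sub_self, P.zero]; exact hδ0pos.le
    have := (hδ0 b a h1 h2).2
    rw [Real.dist_eq]
    have hfrac : ε' / (2 * (t + 1)) * t ≤ ε' / 2 := by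
      rw [div_mul_eq_mul_div, div_le_div_iff₀ (by linarith) (by norm_num)]
      nlinarith
    calc |F b - F a| ≤ ε' / (2 * (t + 1)) * t := this
      _ ≤ ε' / 2 := hfrac
      _ < ε' := by linarith
  have hbdd : BddAbove (Set.range fun v : segment ℝ x xbar => F ↑v) := by
    have hre : (Set.range fun v : segment ℝ x xbar => F ↑v) = F '' segment ℝ x xbar :=
      Set.range_restrict F (segment ℝ x xbar)
    rw [hre]
    exact hsegcomp.bddAbove_image hFcont.continuousOn
  set Sup : ℝ := ⨆ v : segment ℝ x xbar, F ↑v with hSup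
  have hFle : ∀ p ∈ segment ℝ x xbar, F p ≤ Sup := fun p hp =>
    le_ciSup hbdd (⟨p, hp⟩ : segment ℝ x xbar)
  -- the ε-approximate main estimate
  have key : ∀ ε : ℝ, 0 < ε →
      P.ν (ξ t xbar - ξ t x) ≤ Real.exp (Sup + ε) * P.ν (xbar - x) := by
    intro ε hε
    set ε₀ : ℝ := ε / (t + 1) with hε₀
    have hε₀pos : 0 < ε₀ := by rw [hε₀]; positivity
    have hε₀t : ε₀ * t ≤ ε := by
      rw [hε₀, div_mul_eq_mul_div, div_le_iff₀ (by linarith)]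
      nlinarith
    -- choose local δ's
    have H : ∀ a : segment ℝ x xbar, ∃ δ0 > 0, ∀ p q,
        P.ν (p - ↑a) ≤ δ0 → P.ν (q - ↑a) ≤ δ0 →
        (P.ν (ξ t q - ξ t p) ≤ Real.exp (F p + ε₀ * t) * P.ν (q - p))
        ∧ |F p - F a| ≤ ε₀ * t := fun a =>
      local_est P μ hμ hf hJf hξ0 hξ ↑a t ht hε₀pos
    choose δfun hδpos hδprop using H
    -- finite subcover
    set U : segment ℝ x xbar → Set (Fin n → ℝ) :=
      fun a => Metric.ball (↑a) (δfun a / (2 * P.C2)) with hU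
    have hcover : segment ℝ x xbar ⊆ ⋃ a : segment ℝ x xbar, U a := by
      intro p hp
      exact Set.mem_iUnion.mpr ⟨⟨p, hp⟩, by
        rw [hU]
        simp only [Metric.mem_ball, dist_self]
        exact div_pos (hδpos _) (by linarith [P.hC2])⟩
    obtain ⟨tfin, htfin⟩ := hsegcomp.elim_finite_subcover U
      (fun a => Metric.isOpen_ball) hcover
    have htfinne : tfin.Nonempty := by
      obtain ⟨a, ha, -⟩ := Set.mem_iUnion₂.mp (htfin hxseg)
      exact ⟨a, ha⟩
    set δstar : ℝ := tfin.inf' htfinne (fun a => δfun a / (2 * P.C2)) with hδstar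
    have hδstarpos : 0 < δstar := by
      rw [hδstar, Finset.lt_inf'_iff]
      intro a _
      exact div_pos (hδpos _) (by linarith [P.hC2])
    -- the pair estimate
    have pairkey : ∀ p q, p ∈ segment ℝ x xbar → q ∈ segment ℝ x xbar →
        ‖q - p‖ ≤ δstar →
        P.ν (ξ t q - ξ t p) ≤ Real.exp (Sup + ε) * P.ν (q - p) := by
      intro p q hp hq hpq
      obtain ⟨a, hat, hpa⟩ := Set.mem_iUnion₂.mp (htfin hp)
      have hδs : δstar ≤ δfun a / (2 * P.C2) := Finset.inf'_le _ hat
      have hdist : dist p ↑a < δfun a / (2 * P.C2) := by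
        rw [hU] at hpa
        exact Metric.mem_ball.mp hpa
      have h1 : P.ν (p - ↑a) ≤ δfun a := by
        calc P.ν (p - ↑a) ≤ P.C2 * ‖p - ↑a‖ := P.upper _
          _ = P.C2 * dist p ↑a := by rw [dist_eq_norm]
          _ ≤ P.C2 * (δfun a / (2 * P.C2)) := mul_le_mul_of_nonneg_left hdist.le P.hC2.le
          _ = δfun a / 2 := by
              have hC2ne : P.C2 ≠ 0 := ne_of_gt P.hC2
              field_simp
          _ ≤ δfun a := by linarith [hδpos a]
      have h2 : P.ν (q - ↑a) ≤ δfun a := by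
        have hqa : q - ↑a = (q - p) + (p - ↑a) := by abel
        calc P.ν (q - ↑a) = P.ν ((q - p) + (p - ↑a)) := by rw [hqa]
          _ ≤ P.ν (q - p) + P.ν (p - ↑a) := P.add_le _ _
          _ ≤ P.C2 * ‖q - p‖ + P.C2 * dist p ↑a := by
              refine add_le_add (P.upper _) ?_
              rw [dist_eq_norm]; exact P.upper _
          _ ≤ P.C2 * δstar + P.C2 * (δfun a / (2 * P.C2)) := by
              refine add_le_add (mul_le_mul_of_nonneg_left hpq P.hC2.le)
                (mul_le_mul_of_nonneg_left hdist.le P.hC2.le)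
          _ ≤ P.C2 * (δfun a / (2 * P.C2)) + P.C2 * (δfun a / (2 * P.C2)) := by
              refine add_le_add_left (mul_le_mul_of_nonneg_left hδs P.hC2.le) _
          _ = δfun a := by
              have hC2ne : P.C2 ≠ 0 := ne_of_gt P.hC2
              field_simp
              ring
      have hest := (hδprop a p q h1 h2).1
      have hexp : Real.exp (F p + ε₀ * t) ≤ Real.exp (Sup + ε) :=
        Real.exp_le_exp.mpr (add_le_add (hFle p hp) hε₀t)
      calc P.ν (ξ t q - ξ t p) ≤ Real.exp (F p + ε₀ * t) * P.ν (q - p) := hest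
        _ ≤ Real.exp (Sup + ε) * P.ν (q - p) :=
            mul_le_mul_of_nonneg_right hexp (P.nonneg _)
    -- partition
    obtain ⟨N₀, hN₀⟩ := exists_nat_ge (‖xbar - x‖ / δstar)
    set N : ℕ := N₀ + 1 with hN
    have hNpos : 0 < (N:ℝ) := by rw [hN]; push_cast; linarith [Nat.cast_nonneg (α := ℝ) N₀]
    have hNne : (N:ℝ) ≠ 0 := ne_of_gt hNpos
    have hNbound : ‖xbar - x‖ ≤ (N:ℝ) * δstar := by
      have h1 : ‖xbar - x‖ / δstar ≤ (N:ℝ) := by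
        rw [hN]; push_cast; linarith
      rw [div_le_iff₀ hδstarpos] at h1
      linarith
    set γ : ℕ → (Fin n → ℝ) := fun k => x + ((k:ℝ)/(N:ℝ)) • (xbar - x) with hγ
    have hγ0 : γ 0 = x := by rw [hγ]; simp
    have hγN : γ N = xbar := by
      rw [hγ]
      simp only [div_self hNne, one_smul]
      abel
    have hγseg : ∀ k, k ≤ N → γ k ∈ segment ℝ x xbar := by
      intro k hk
      rw [segment_eq_image']
      refine ⟨(k:ℝ)/(N:ℝ), ⟨by positivity, ?_⟩, rfl⟩
      rw [div_le_one hNpos]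
      exact_mod_cast hk
    have hγdiff : ∀ k, γ (k+1) - γ k = ((N:ℝ))⁻¹ • (xbar - x) := by
      intro k
      show (x + ((((k+1):ℕ):ℝ)/(N:ℝ)) • (xbar - x)) - (x + ((k:ℝ)/(N:ℝ)) • (xbar - x))
          = ((N:ℝ))⁻¹ • (xbar - x)
      rw [Nat.cast_add, Nat.cast_one]
      have h1 : (x + ((((k:ℝ)+1))/(N:ℝ)) • (xbar - x)) - (x + ((k:ℝ)/(N:ℝ)) • (xbar - x))
          = (((((k:ℝ)+1))/(N:ℝ)) - ((k:ℝ)/(N:ℝ))) • (xbar - x) := by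
        rw [sub_smul]; abel
      rw [h1]
      congr 1
      ring
    have hγnorm : ∀ k, ‖γ (k+1) - γ k‖ ≤ δstar := by
      intro k
      rw [hγdiff k, norm_smul, Real.norm_eq_abs, abs_of_nonneg (by positivity)]
      calc ((N:ℝ))⁻¹ * ‖xbar - x‖ ≤ ((N:ℝ))⁻¹ * ((N:ℝ) * δstar) :=
            mul_le_mul_of_nonneg_left hNbound (by positivity)
        _ = δstar := by field_simp
    have hγν : ∀ k, P.ν (γ (k+1) - γ k) = ((N:ℝ))⁻¹ * P.ν (xbar - x) := by
      intro k
      rw [hγdiff k, P.smul, abs_of_nonneg (by positivity)]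
    have htel : ξ t xbar - ξ t x = ∑ k ∈ Finset.range N, (ξ t (γ (k+1)) - ξ t (γ k)) := by
      rw [Finset.sum_range_sub (fun k => ξ t (γ k)) N, hγN, hγ0]
    calc P.ν (ξ t xbar - ξ t x)
        = P.ν (∑ k ∈ Finset.range N, (ξ t (γ (k+1)) - ξ t (γ k))) := by rw [htel]
      _ ≤ ∑ k ∈ Finset.range N, P.ν (ξ t (γ (k+1)) - ξ t (γ k)) := P.sum_le _ _
      _ ≤ ∑ _k ∈ Finset.range N, Real.exp (Sup + ε) * (((N:ℝ))⁻¹ * P.ν (xbar - x)) := by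
          refine Finset.sum_le_sum fun k hk => ?_
          have hkN : k < N := Finset.mem_range.mp hk
          have := pairkey (γ k) (γ (k+1)) (hγseg k hkN.le) (hγseg (k+1) hkN)
            (hγnorm k)
          rw [hγν k] at this
          exact this
      _ = Real.exp (Sup + ε) * P.ν (xbar - x) := by
          rw [Finset.sum_const, Finset.card_range, nsmul_eq_mul]
          field_simp
  -- let ε → 0
  have htend : Tendsto (fun ε : ℝ => Real.exp (Sup + ε) * P.ν (xbar - x))
      (𝓝[>] 0) (𝓝 (Real.exp Sup * P.ν (xbar - x))) := by
    have hc : Continuous fun ε : ℝ => Real.exp (Sup + ε) * P.ν (xbar - x) :=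
      (Real.continuous_exp.comp (continuous_const.add continuous_id)).mul continuous_const
    have := (hc.tendsto 0).mono_left (nhdsWithin_le_nhds (s := Set.Ioi (0:ℝ)))
    simpa using this
  refine ge_of_tendsto htend ?_
  filter_upwards [self_mem_nhdsWithin] with ε hε
  exact key ε hε
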